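/- tan(5π/11) − 4·sin(4π/11) = √11. -/

import Mathlib

set_option maxHeartbeats 1000000

private lemma alg1 (x y : ℝ) (h1 : x^2 + y^2 = 1)
    (hR : (-1) + 16*y^2 + 20*x^2*y^2 + 24*x^4*y^2 + (-76)*y^4 + (-224)*x^2*y^4 + (-192)*x^4*y^4 + 264*y^6 + 640*x^2*y^6 + 256*x^4*y^6 + (-448)*y^8 + (-512)*x^2*y^8 + 256*y^10 = 0)
    (hC : 1 + (-1)*y + (-6)*x^2*y + (-4)*x^4*y + 10*y^3 + 60*x^2*y^3 + 104*x^4*y^3 + 32*x^6*y^3 + (-32)*y^5 + (-320)*x^2*y^5 + (-448)*x^4*y^5 + (-64)*x^6*y^5 + 88*y^7 + 672*x^2*y^7 + 448*x^4*y^7 + (-128)*y^9 + (-448)*x^2*y^9 + 64*y^11 = 0) :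
    ((1*x + (-12)*x*y^2 + 16*x*y^4) - 2*(2*x*y) + 2*x)^2 = 11*(1*y + 4*x^2*y + (-8)*y^3 + (-8)*x^2*y^3 + 8*y^5)^2 := by
  linear_combination (2 + (-10)*y + (-16)*y^2 + 8*y^3 + 16*y^4) * hC + ((-7) + (-8)*y + 14*y^2 + 24*y^3 + (-8)*y^4 + (-16)*y^5) * hR + (9 + (-4)*y + 8*x^2*y + (-112)*y^2 + (-48)*x^2*y^2 + (-112)*y^3 + (-144)*x^2*y^3 + (-64)*x^4*y^3 + 384*y^4 + 416*x^2*y^4 + 320*x^4*y^4 + 656*y^5 + 1216*x^2*y^5 + 640*x^4*y^5 + (-1376)*y^6 + (-2560)*x^2*y^6 + (-896)*x^4*y^6 + (-2688)*y^7 + (-4864)*x^2*y^7 + (-1536)*x^4*y^7 + 3520*y^8 + 4352*x^2*y^8 + 512*x^4*y^8 + 6272*y^9 + 7680*x^2*y^9 + 1024*x^4*y^9 + (-3968)*y^10 + (-2048)*x^2*y^10 + (-7168)*y^11 + (-4096)*x^2*y^11 + 1536*y^12 + 3072*y^13) * h1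

private lemma alg2 (x y : ℝ) (h1 : x^2 + y^2 = 1)
    (hR : (-1) + 16*y^2 + 20*x^2*y^2 + 24*x^4*y^2 + (-76)*y^4 + (-224)*x^2*y^4 + (-192)*x^4*y^4 + 264*y^6 + 640*x^2*y^6 + 256*x^4*y^6 + (-448)*y^8 + (-512)*x^2*y^8 + 256*y^10 = 0)
    (hC : 1 + (-1)*y + (-6)*x^2*y + (-4)*x^4*y + 10*y^3 + 60*x^2*y^3 + 104*x^4*y^3 + 32*x^6*y^3 + (-32)*y^5 + (-320)*x^2*y^5 + (-448)*x^4*y^5 + (-64)*x^6*y^5 + 88*y^7 + 672*x^2*y^7 + 448*x^4*y^7 + (-128)*y^9 + (-448)*x^2*y^9 + 64*y^11 = 0) :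
    (1*x + (-12)*x*y^2 + 16*x*y^4) - 4*((-4)*x*y + 8*x*y^3)*(1*y + 4*x^2*y + (-8)*y^3 + (-8)*x^2*y^3 + 8*y^5) = (1*x + (-12)*x*y^2 + 16*x*y^4) - 2*(2*x*y) + 2*x := by
  linear_combination (4*x*y) * hC + (2*x + (-4)*x*y^2) * hR + (16*x*y^2 + (-32)*x^3*y^2 + (-64)*x^3*y^4 + (-128)*x^5*y^4 + 320*x*y^6 + 896*x^3*y^6 + 256*x^5*y^6 + (-1024)*x*y^8 + (-1024)*x^3*y^8 + 768*x*y^10) * h1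

private lemma expand (s : ℝ) :
    Real.sin (2*s) = (2*(Real.sin s)*(Real.cos s)) ∧
    Real.sin (4*s) = ((-4)*(Real.sin s)*(Real.cos s) + 8*(Real.sin s)*(Real.cos s)^3) ∧
    Real.sin (5*s) = (1*(Real.sin s) + (-12)*(Real.sin s)*(Real.cos s)^2 + 16*(Real.sin s)*(Real.cos s)^4) ∧
    Real.cos (5*s) = (1*(Real.cos s) + 4*(Real.sin s)^2*(Real.cos s) + (-8)*(Real.cos s)^3 + (-8)*(Real.sin s)^2*(Real.cos s)^3 + 8*(Real.cos s)^5) ∧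
    Real.sin (11*s) = ((-1)*(Real.sin s) + 16*(Real.sin s)*(Real.cos s)^2 + 20*(Real.sin s)^3*(Real.cos s)^2 + 24*(Real.sin s)^5*(Real.cos s)^2 + (-76)*(Real.sin s)*(Real.cos s)^4 + (-224)*(Real.sin s)^3*(Real.cos s)^4 + (-192)*(Real.sin s)^5*(Real.cos s)^4 + 264*(Real.sin s)*(Real.cos s)^6 + 640*(Real.sin s)^3*(Real.cos s)^6 + 256*(Real.sin s)^5*(Real.cos s)^6 + (-448)*(Real.sin s)*(Real.cos s)^8 + (-512)*(Real.sin s)^3*(Real.cos s)^8 + 256*(Real.sin s)*(Real.cos s)^10) ∧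
    Real.cos (11*s) = ((-1)*(Real.cos s) + (-6)*(Real.sin s)^2*(Real.cos s) + (-4)*(Real.sin s)^4*(Real.cos s) + 10*(Real.cos s)^3 + 60*(Real.sin s)^2*(Real.cos s)^3 + 104*(Real.sin s)^4*(Real.cos s)^3 + 32*(Real.sin s)^6*(Real.cos s)^3 + (-32)*(Real.cos s)^5 + (-320)*(Real.sin s)^2*(Real.cos s)^5 + (-448)*(Real.sin s)^4*(Real.cos s)^5 + (-64)*(Real.sin s)^6*(Real.cos s)^5 + 88*(Real.cos s)^7 + 672*(Real.sin s)^2*(Real.cos s)^7 + 448*(Real.sin s)^4*(Real.cos s)^7 + (-128)*(Real.cos s)^9 + (-448)*(Real.sin s)^2*(Real.cos s)^9 + 64*(Real.cos s)^11) := by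
  have hxy : Real.sin s ^ 2 + Real.cos s ^ 2 = 1 := Real.sin_sq_add_cos_sq s
  have e2 : Real.sin (2*s) = (2*(Real.sin s)*(Real.cos s)) := by
    rw [show 2*s = s + s by ring, Real.sin_add]; ring
  have f2 : Real.cos (2*s) = ((-1) + 2*(Real.cos s)^2) := by
    rw [show 2*s = s + s by ring, Real.cos_add]; linear_combination - hxy
  have e3 : Real.sin (3*s) = ((-1)*(Real.sin s) + 4*(Real.sin s)*(Real.cos s)^2) := by
    rw [show 3*s = 2*s + s by ring, Real.sin_add, e2, f2]; ring
  have f3 : Real.cos (3*s) = ((-1)*(Real.cos s) + (-2)*(Real.sin s)^2*(Real.cos s) + 2*(Real.cos s)^3) := by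
    rw [show 3*s = 2*s + s by ring, Real.cos_add, e2, f2]; ring
  have e4 : Real.sin (4*s) = ((-4)*(Real.sin s)*(Real.cos s) + 8*(Real.sin s)*(Real.cos s)^3) := by
    rw [show 4*s = 2*s + 2*s by ring, Real.sin_add, e2, f2]; ring
  have f4 : Real.cos (4*s) = (1 + (-8)*(Real.cos s)^2 + 8*(Real.cos s)^4) := by
    rw [show 4*s = 2*(2*s) by ring, Real.cos_two_mul, f2]; ring
  have e5 : Real.sin (5*s) = (1*(Real.sin s) + (-12)*(Real.sin s)*(Real.cos s)^2 + 16*(Real.sin s)*(Real.cos s)^4) := by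
    rw [show 5*s = 4*s + s by ring, Real.sin_add, e4, f4]; ring
  have f5 : Real.cos (5*s) = (1*(Real.cos s) + 4*(Real.sin s)^2*(Real.cos s) + (-8)*(Real.cos s)^3 + (-8)*(Real.sin s)^2*(Real.cos s)^3 + 8*(Real.cos s)^5) := by
    rw [show 5*s = 4*s + s by ring, Real.cos_add, e4, f4]; ring
  have e6 : Real.sin (6*s) = (2*(Real.sin s)*(Real.cos s) + 4*(Real.sin s)^3*(Real.cos s) + (-12)*(Real.sin s)*(Real.cos s)^3 + (-16)*(Real.sin s)^3*(Real.cos s)^3 + 16*(Real.sin s)*(Real.cos s)^5) := by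
    rw [show 6*s = 3*s + 3*s by ring, Real.sin_add, e3, f3]; ring
  have f6 : Real.cos (6*s) = ((-1) + 2*(Real.cos s)^2 + 8*(Real.sin s)^2*(Real.cos s)^2 + 8*(Real.sin s)^4*(Real.cos s)^2 + (-8)*(Real.cos s)^4 + (-16)*(Real.sin s)^2*(Real.cos s)^4 + 8*(Real.cos s)^6) := by
    rw [show 6*s = 2*(3*s) by ring, Real.cos_two_mul, f3]; ring
  have e11 : Real.sin (11*s) = ((-1)*(Real.sin s) + 16*(Real.sin s)*(Real.cos s)^2 + 20*(Real.sin s)^3*(Real.cos s)^2 + 24*(Real.sin s)^5*(Real.cos s)^2 + (-76)*(Real.sin s)*(Real.cos s)^4 + (-224)*(Real.sin s)^3*(Real.cos s)^4 + (-192)*(Real.sin s)^5*(Real.cos s)^4 + 264*(Real.sin s)*(Real.cos s)^6 + 640*(Real.sin s)^3*(Real.cos s)^6 + 256*(Real.sin s)^5*(Real.cos s)^6 + (-448)*(Real.sin s)*(Real.cos s)^8 + (-512)*(Real.sin s)^3*(Real.cos s)^8 + 256*(Real.sin s)*(Real.cos s)^10) := by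
    rw [show 11*s = 5*s + 6*s by ring, Real.sin_add, e5, f5, e6, f6]; ring
  have f11 : Real.cos (11*s) = ((-1)*(Real.cos s) + (-6)*(Real.sin s)^2*(Real.cos s) + (-4)*(Real.sin s)^4*(Real.cos s) + 10*(Real.cos s)^3 + 60*(Real.sin s)^2*(Real.cos s)^3 + 104*(Real.sin s)^4*(Real.cos s)^3 + 32*(Real.sin s)^6*(Real.cos s)^3 + (-32)*(Real.cos s)^5 + (-320)*(Real.sin s)^2*(Real.cos s)^5 + (-448)*(Real.sin s)^4*(Real.cos s)^5 + (-64)*(Real.sin s)^6*(Real.cos s)^5 + 88*(Real.cos s)^7 + 672*(Real.sin s)^2*(Real.cos s)^7 + 448*(Real.sin s)^4*(Real.cos s)^7 + (-128)*(Real.cos s)^9 + (-448)*(Real.sin s)^2*(Real.cos s)^9 + 64*(Real.cos s)^11) := by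
    rw [show 11*s = 5*s + 6*s by ring, Real.cos_add, e5, f5, e6, f6]; ring
  exact ⟨e2, e4, e5, f5, e11, f11⟩

theorem stmt4 : Real.tan (5*Real.pi/11) - 4*Real.sin (4*Real.pi/11) = Real.sqrt 11 := by
  have hπ : (0:ℝ) < Real.pi := Real.pi_pos
  obtain ⟨e2, e4, e5, f5, e11, f11⟩ := expand (Real.pi/11)
  set x := Real.sin (Real.pi/11) with hxd
  set y := Real.cos (Real.pi/11) with hyd
  have hxy : x ^ 2 + y ^ 2 = 1 := Real.sin_sq_add_cos_sq _
  have hxpos : 0 < x := Real.sin_pos_of_pos_of_lt_pi (by positivity) (by linarith)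
  have hs11 : Real.sin (11*(Real.pi/11)) = 0 := by
    rw [show 11*(Real.pi/11) = Real.pi by ring]; exact Real.sin_pi
  have hc11 : Real.cos (11*(Real.pi/11)) = -1 := by
    rw [show 11*(Real.pi/11) = Real.pi by ring]; exact Real.cos_pi
  have hR : (-1) + 16*y^2 + 20*x^2*y^2 + 24*x^4*y^2 + (-76)*y^4 + (-224)*x^2*y^4 + (-192)*x^4*y^4 + 264*y^6 + 640*x^2*y^6 + 256*x^4*y^6 + (-448)*y^8 + (-512)*x^2*y^8 + 256*y^10 = 0 := by
    have hxR : x * ((-1) + 16*y^2 + 20*x^2*y^2 + 24*x^4*y^2 + (-76)*y^4 + (-224)*x^2*y^4 + (-192)*x^4*y^4 + 264*y^6 + 640*x^2*y^6 + 256*x^4*y^6 + (-448)*y^8 + (-512)*x^2*y^8 + 256*y^10) = 0 := by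
      rw [e11] at hs11; linear_combination hs11
    rcases mul_eq_zero.mp hxR with h | h
    · exact absurd h (ne_of_gt hxpos)
    · exact h
  have hC : 1 + (-1)*y + (-6)*x^2*y + (-4)*x^4*y + 10*y^3 + 60*x^2*y^3 + 104*x^4*y^3 + 32*x^6*y^3 + (-32)*y^5 + (-320)*x^2*y^5 + (-448)*x^4*y^5 + (-64)*x^6*y^5 + 88*y^7 + 672*x^2*y^7 + 448*x^4*y^7 + (-128)*y^9 + (-448)*x^2*y^9 + 64*y^11 = 0 := by
    rw [f11] at hc11; linear_combination hc11
  have hc5pos : 0 < Real.cos (5*(Real.pi/11)) := by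
    apply Real.cos_pos_of_mem_Ioo
    constructor <;> [linarith; linarith]
  -- nonnegativity of A
  have hAnn : 0 ≤ Real.sin (5*(Real.pi/11)) - 2*Real.sin (2*(Real.pi/11)) + 2*x := by
    have h1 : Real.sin (5*(Real.pi/11)) = Real.cos (Real.pi/22) := by
      rw [← Real.cos_pi_div_two_sub]; congr 1; ring
    have h2 : Real.sin (2*(Real.pi/11)) - x = 2 * Real.sin (Real.pi/22) * Real.cos (3*(Real.pi/22)) := by
      rw [hxd, Real.sin_sub_sin, show (2*(Real.pi/11) - Real.pi/11)/2 = Real.pi/22 by ring,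
        show (2*(Real.pi/11) + Real.pi/11)/2 = 3*(Real.pi/22) by ring]
    have hb1 : Real.sin (Real.pi/22) ≤ Real.pi/22 := Real.sin_le (by positivity)
    have hb2 : 1 - (Real.pi/22)^2/2 ≤ Real.cos (Real.pi/22) := Real.one_sub_sq_div_two_le_cos
    have hb3 : Real.cos (3*(Real.pi/22)) ≤ 1 := Real.cos_le_one _
    have hb4 : 0 ≤ Real.sin (Real.pi/22) :=
      Real.sin_nonneg_of_nonneg_of_le_pi (by positivity) (by linarith)
    have hb5 : Real.pi < 3.15 := Real.pi_lt_d2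
    nlinarith [mul_nonneg hb4 (sub_nonneg.mpr hb3), sq_nonneg (Real.pi/22)]
  -- squared identity, transported to trig level
  have hXsq : (Real.sin (5*(Real.pi/11)) - 2*Real.sin (2*(Real.pi/11)) + 2*x)^2
      = 11 * Real.cos (5*(Real.pi/11))^2 := by
    rw [e5, e2, f5]; exact alg1 x y hxy hR hC
  have hX : Real.sin (5*(Real.pi/11)) - 2*Real.sin (2*(Real.pi/11)) + 2*x
      = Real.sqrt 11 * Real.cos (5*(Real.pi/11)) := by
    have h := congrArg Real.sqrt hXsq
    rwa [Real.sqrt_sq hAnn, Real.sqrt_mul (by norm_num : (0:ℝ) ≤ 11), Real.sqrt_sq hc5pos.le] at h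
  have hlin : Real.sin (5*(Real.pi/11)) - 4*Real.sin (4*(Real.pi/11))*Real.cos (5*(Real.pi/11))
      = Real.sin (5*(Real.pi/11)) - 2*Real.sin (2*(Real.pi/11)) + 2*x := by
    rw [e5, e4, f5, e2]; exact alg2 x y hxy hR hC
  rw [show 5*Real.pi/11 = 5*(Real.pi/11) by ring, show 4*Real.pi/11 = 4*(Real.pi/11) by ring,
    Real.tan_eq_sin_div_cos]
  rw [div_sub' (ne_of_gt hc5pos), div_eq_iff (ne_of_gt hc5pos)]
  linear_combination hlin + hX
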